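/- Let x be a nonzero vector in ℝ², let p and q be nonzero points lying on a common ray emanating from the origin (i.e., q = t·p for some t > 0), and suppose x is not collinear with p. Let z be a point of the segment pq (so z ≠ 0 and z ≠ x). Then f(x,z) ≥ min{f(x,p), f(x,q)}, where f(u,v) := (‖u‖+‖v‖)/‖u−v‖. -/
import Mathlib


/-- let `x` be a nonzero vector of the plane, let `p` and `q = t • p`
(`t > 0`) be nonzero points on a common ray from the origin with `x` not collinear
with `p`, and let `z` be a point of the segment `pq`. Then
`f(x, z) ≥ min (f(x, p)) (f(x, q))`, where `f(u, v) = (‖u‖ + ‖v‖)/‖u - v‖`. -/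
theorem f_on_ray_min (x p q : EuclideanSpace ℝ (Fin 2))
    (hx : x ≠ 0) (hp : p ≠ 0) (t : ℝ) (ht : 0 < t) (hq : q = t • p)
    (hncol : ∀ c : ℝ, x ≠ c • p)
    (z : EuclideanSpace ℝ (Fin 2)) (hz : z ∈ segment ℝ p q) :
    min ((‖x‖ + ‖p‖) / ‖x - p‖) ((‖x‖ + ‖q‖) / ‖x - q‖) ≤ (‖x‖ + ‖z‖) / ‖x - z‖ := by
  obtain ⟨a, b, ha, hb, hab, hzeq⟩ := hz
  set m := min ((‖x‖ + ‖p‖) / ‖x - p‖) ((‖x‖ + ‖q‖) / ‖x - q‖) with hm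
  have hxp : x - p ≠ 0 := sub_ne_zero.2 (by simpa using hncol 1)
  have hxq : x - q ≠ 0 := sub_ne_zero.2 (by rw [hq]; exact hncol t)
  have hz' : z = (a + b * t) • p := by
    rw [← hzeq, hq, smul_smul, add_smul]
  have hs : 0 < a + b * t := by
    rcases eq_or_lt_of_le hb with h | h
    · nlinarith
    · nlinarith [mul_pos h ht]
  have hxz : x - z ≠ 0 := sub_ne_zero.2 (by rw [hz']; exact hncol _)
  have hnp : 0 < ‖x - p‖ := norm_pos_iff.2 hxp
  have hnq : 0 < ‖x - q‖ := norm_pos_iff.2 hxq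
  have hnz : 0 < ‖x - z‖ := norm_pos_iff.2 hxz
  have hm0 : 0 ≤ m := le_min (by positivity) (by positivity)
  have h1 : m * ‖x - p‖ ≤ ‖x‖ + ‖p‖ :=
    (le_div_iff₀ hnp).1 (min_le_left _ _)
  have h2 : m * ‖x - q‖ ≤ ‖x‖ + ‖q‖ :=
    (le_div_iff₀ hnq).1 (min_le_right _ _)
  have hqn : ‖q‖ = t * ‖p‖ := by
    rw [hq, norm_smul, Real.norm_eq_abs, abs_of_pos ht]
  have hzn : ‖z‖ = a * ‖p‖ + b * ‖q‖ := by
    rw [hz', norm_smul, Real.norm_eq_abs, abs_of_pos hs, hqn]; ring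
  have hdec : x - z = a • (x - p) + b • (x - q) := by
    rw [← hzeq]; match_scalars <;> linarith
  have htri : ‖x - z‖ ≤ a * ‖x - p‖ + b * ‖x - q‖ := by
    calc ‖x - z‖ ≤ ‖a • (x - p)‖ + ‖b • (x - q)‖ := by
          rw [hdec]; exact norm_add_le _ _
      _ = a * ‖x - p‖ + b * ‖x - q‖ := by
          rw [norm_smul, norm_smul, Real.norm_eq_abs, Real.norm_eq_abs,
            abs_of_nonneg ha, abs_of_nonneg hb]
  rw [le_div_iff₀ hnz]
  have key : m * ‖x - z‖ ≤ a * (‖x‖ + ‖p‖) + b * (‖x‖ + ‖q‖) := by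
    nlinarith [mul_le_mul_of_nonneg_left htri hm0, mul_le_mul_of_nonneg_left h1 ha,
      mul_le_mul_of_nonneg_left h2 hb]
  calc m * ‖x - z‖ ≤ a * (‖x‖ + ‖p‖) + b * (‖x‖ + ‖q‖) := key
    _ = ‖x‖ + ‖z‖ := by rw [hzn]; linear_combination ‖x‖ * hab
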